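/- arXiv:2004.12488 — 5 statements merged into one kernel-verified Lean document; each statement's English description precedes it below -/
import Mathlib

section
/- Let (X,E) be a strict poset and A ⊆ X. Let ≈_A be the equivalence relation on X defined by x ≈_A y iff x = y or (x ∈ A and y ∈ A). Then the transitive closure S of the relation on X/≈_A induced by E is irreflexive (equivalently, the quotient map X → X/≈_A is order preserving into (X/≈_A, S)) if and only if A is an antichain in (X,E). -/
/-- The relation on the quotient `X/≈` induced by a relation `E` on `X`. -/
def inducedRel {X : Type*} (E : X → X → Prop) (s : Setoid X) :
    Quotient s → Quotient s → Prop :=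
  fun α β => ∃ x y : X, Quotient.mk s x = α ∧ Quotient.mk s y = β ∧ E x y

/-- The equivalence relation `≈_A` on `X` identifying all elements of `A ⊆ X`
and nothing else: `x ≈_A y` iff `x = y` or both `x ∈ A` and `y ∈ A`. -/
def subsetSetoid {X : Type*} (A : Set X) : Setoid X where
  r x y := x = y ∨ (x ∈ A ∧ y ∈ A)
  iseqv := by
    refine ⟨fun x => Or.inl rfl, ?_, ?_⟩
    · rintro x y (rfl | ⟨hx, hy⟩)
      · exact Or.inl rfl
      · exact Or.inr ⟨hy, hx⟩
    · rintro x y z (rfl | ⟨hx, hy⟩) hyz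
      · exact hyz
      · rcases hyz with rfl | ⟨_, hz⟩
        · exact Or.inr ⟨hx, hy⟩
        · exact Or.inr ⟨hx, hz⟩

lemma subsetSetoid_eq {X : Type*} {A : Set X} {x y : X}
    (h : Quotient.mk (subsetSetoid A) x = Quotient.mk (subsetSetoid A) y) :
    x = y ∨ (x ∈ A ∧ y ∈ A) :=
  Quotient.exact h

/-- For a strict poset `(X,E)` and `A ⊆ X`, the transitive closure of
the relation induced by `E` on `X/≈_A` is irreflexive (i.e. the quotient map is order
preserving) iff `A` is an antichain in `(X,E)`. -/
theorem quotient_by_subset_orderPreserving_iff_antichain {X : Type*}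
    (E : X → X → Prop) (hirr : Irreflexive E) (htrans : Transitive E) (A : Set X) :
    Irreflexive (Relation.TransGen (inducedRel E (subsetSetoid A))) ↔
      ∀ a ∈ A, ∀ a' ∈ A, ¬ E a a' ∧ ¬ E a' a := by
  constructor
  · intro hI a ha a' ha'
    constructor
    · intro hE
      apply hI (Quotient.mk (subsetSetoid A) a)
      apply Relation.TransGen.single
      exact ⟨a, a', rfl, Quotient.sound (Or.inr ⟨ha', ha⟩), hE⟩
    · intro hE
      apply hI (Quotient.mk (subsetSetoid A) a')
      apply Relation.TransGen.single
      exact ⟨a', a, rfl, Quotient.sound (Or.inr ⟨ha, ha'⟩), hE⟩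
  · intro hanti
    have key : ∀ α β, Relation.TransGen (inducedRel E (subsetSetoid A)) α β →
        ∃ x y, Quotient.mk (subsetSetoid A) x = α ∧ Quotient.mk (subsetSetoid A) y = β ∧
          (E x y ∨ ∃ a a', a ∈ A ∧ a' ∈ A ∧ E x a ∧ E a' y) := by
      intro α β h
      induction h with
      | single h => obtain ⟨x, y, hx, hy, hE⟩ := h; exact ⟨x, y, hx, hy, Or.inl hE⟩
      | tail _ hstep ih =>
        obtain ⟨x, y, hx, hy, hcase⟩ := ih
        obtain ⟨y', z, hy', hz, hE'⟩ := hstep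
        rcases subsetSetoid_eq (hy.trans hy'.symm) with rfl | ⟨hyA, hy'A⟩
        · rcases hcase with hE | ⟨a, a', haA, ha'A, hE1, hE2⟩
          · exact ⟨x, z, hx, hz, Or.inl (htrans hE hE')⟩
          · exact ⟨x, z, hx, hz, Or.inr ⟨a, a', haA, ha'A, hE1, htrans hE2 hE'⟩⟩
        · rcases hcase with hE | ⟨a, a', haA, ha'A, hE1, hE2⟩
          · exact ⟨x, z, hx, hz, Or.inr ⟨y, y', hyA, hy'A, hE, hE'⟩⟩
          · exact absurd hE2 (hanti a' ha'A y hyA).1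
    intro α hloop
    obtain ⟨x, y, hx, hy, hcase⟩ := key α α hloop
    rcases subsetSetoid_eq (hx.trans hy.symm) with rfl | ⟨hxA, hyA⟩
    · rcases hcase with hE | ⟨a, a', haA, ha'A, hE1, hE2⟩
      · exact hirr x hE
      · exact (hanti a' ha'A a haA).1 (htrans hE2 hE1)
    · rcases hcase with hE | ⟨a, a', haA, ha'A, hE1, hE2⟩
      · exact (hanti x hxA y hyA).1 hE
      · exact (hanti x hxA a haA).1 hE1
end

section
/- Let θ be a dendrogram over a finite nonempty set X. Then: (i) for all x, y ∈ X, the set { t ≥ 0 | x and y lie in one block of θ(t) } is nonempty and has a least element, so Ψ_X(θ)(x,y) = min{ t ≥ 0 | x and y lie in one block of θ(t) } is well defined; (ii) Ψ_X(θ) is an ultrametric on X: it vanishes exactly as required on the diagonal, is symmetric, and satisfies Ψ_X(θ)(x,z) ≤ max(Ψ_X(θ)(x,y), Ψ_X(θ)(y,z)) for all x, y, z ∈ X. -/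
open scoped NNReal

/-- `Ψ_X(θ)(x,y)`: the least `t` at which `x` and `y` lie in one block of `θ(t)`. -/
noncomputable def PsiMap {X : Type*} (θ : ℝ≥0 → Setoid X) (x y : X) : ℝ≥0 :=
  sInf {t : ℝ≥0 | (θ t).r x y}

theorem Psi_least {X : Type*} (θ : ℝ≥0 → Setoid X) (hmono : Monotone θ)
    (hD1 : ∀ t : ℝ≥0, ∃ δ : ℝ≥0, 0 < δ ∧ θ t = θ (t + δ))
    (hD2 : ∃ t₀ : ℝ≥0, 0 < t₀ ∧ θ t₀ = ⊤) (x y : X) :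
    IsLeast {t : ℝ≥0 | (θ t).r x y} (PsiMap θ x y) := by
  obtain ⟨t₀, -, ht₀⟩ := hD2
  have hne : ({t : ℝ≥0 | (θ t).r x y}).Nonempty := ⟨t₀, by rw [Set.mem_setOf_eq, ht₀]; trivial⟩
  constructor
  · obtain ⟨δ, hδ, hθ⟩ := hD1 (PsiMap θ x y)
    obtain ⟨t, ht, htlt⟩ := exists_lt_of_csInf_lt hne
      (show sInf {t : ℝ≥0 | (θ t).r x y} < PsiMap θ x y + δ from
        lt_add_of_pos_right _ hδ)
    show (θ (PsiMap θ x y)).r x y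
    rw [hθ]
    exact hmono htlt.le ht
  · exact fun t ht => csInf_le (OrderBot.bddBelow _) ht

/-- For a dendrogram `θ` over a finite nonempty set `X`:
(i) for all `x, y` the set `{t | x, y in one block of θ(t)}` is nonempty and has a
least element, so `Ψ_X(θ)(x,y)` is well defined as a minimum; (ii) `Ψ_X(θ)` is an
ultrametric on `X`: it vanishes on the diagonal, is symmetric, and satisfies the
ultrametric inequality (nonnegativity being automatic in `ℝ≥0`). -/
theorem Psi_is_ultrametric {X : Type*} [Finite X] [Nonempty X]
    (θ : ℝ≥0 → Setoid X) (hmono : Monotone θ)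
    (hD1 : ∀ t : ℝ≥0, ∃ δ : ℝ≥0, 0 < δ ∧ θ t = θ (t + δ))
    (hD3 : θ 0 = ⊥)
    (hD2 : ∃ t₀ : ℝ≥0, 0 < t₀ ∧ θ t₀ = ⊤) :
    (∀ x y : X, ({t : ℝ≥0 | (θ t).r x y}).Nonempty ∧
      ∃ tm : ℝ≥0, IsLeast {t : ℝ≥0 | (θ t).r x y} tm) ∧
    (∀ x : X, PsiMap θ x x = 0) ∧
    (∀ x y : X, PsiMap θ x y = PsiMap θ y x) ∧
    (∀ x y z : X, PsiMap θ x z ≤ max (PsiMap θ x y) (PsiMap θ y z)) := by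
  have hle := Psi_least θ hmono hD1 hD2
  refine ⟨fun x y => ⟨⟨_, (hle x y).1⟩, ⟨_, hle x y⟩⟩, ?_, ?_, ?_⟩
  · intro x
    exact le_antisymm ((hle x x).2 (by exact (θ 0).iseqv.refl x)) zero_le
  · intro x y
    have h : ∀ a b : X, {t : ℝ≥0 | (θ t).r a b} = {t : ℝ≥0 | (θ t).r b a} := by
      intro a b; ext t; exact ⟨fun h => (θ t).symm h, fun h => (θ t).symm h⟩
    simp [PsiMap, h x y]
  · intro x y z
    set m := max (PsiMap θ x y) (PsiMap θ y z)
    have hxy : (θ m).r x y := hmono (le_max_left _ _) (hle x y).1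
    have hyz : (θ m).r y z := hmono (le_max_right _ _) (hle y z).1
    exact (hle x z).2 ((θ m).trans' hxy hyz)
end

section
/- Let X be a finite nonempty set, θ a partial dendrogram over X, and ε ≥ 0. Then U_ε(θ) is an ultrametric on X: it vanishes on the diagonal, is symmetric, and satisfies U_ε(θ)(x,z) ≤ max(U_ε(θ)(x,y), U_ε(θ)(y,z)) for all x, y, z ∈ X. -/
open scoped NNReal
open Classical

/-- The diameter of a partial dendrogram `θ`: the least `t` at which `θ`
attains its greatest partition `θ(∞) = ⨆ t', θ t'`. -/
noncomputable def diamPD {X : Type*} (θ : ℝ≥0 → Setoid X) : ℝ≥0 :=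
  sInf {t : ℝ≥0 | θ t = ⨆ t', θ t'}

/-- The ultrametric completion `U_ε(θ)`: the merge height of `x` and `y` if they
end up in one block of `θ(∞)`, and `diam θ + ε` otherwise. -/
noncomputable def Ueps {X : Type*} (θ : ℝ≥0 → Setoid X) (ε : ℝ≥0) (x y : X) : ℝ≥0 :=
  if (⨆ t, θ t).r x y then sInf {t : ℝ≥0 | (θ t).r x y} else diamPD θ + ε

/-- For a partial dendrogram `θ` over a finite nonempty set `X` and
`ε ≥ 0`, the ultrametric completion `U_ε(θ)` is an ultrametric on `X`: it vanishes
on the diagonal, is symmetric, and satisfies the ultrametric inequality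
(nonnegativity being automatic in `ℝ≥0`). -/
theorem Ueps_is_ultrametric {X : Type*} [Finite X] [Nonempty X]
    (θ : ℝ≥0 → Setoid X) (hmono : Monotone θ)
    (hD1 : ∀ t : ℝ≥0, ∃ δ : ℝ≥0, 0 < δ ∧ θ t = θ (t + δ))
    (hD3 : θ 0 = ⊥)
    (ε : ℝ≥0) :
    (∀ x : X, Ueps θ ε x x = 0) ∧
    (∀ x y : X, Ueps θ ε x y = Ueps θ ε y x) ∧
    (∀ x y z : X, Ueps θ ε x z ≤ max (Ueps θ ε x y) (Ueps θ ε y z)) := by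
  classical
  haveI : Finite (Setoid X) :=
    Finite.of_injective (fun s : Setoid X => s.r)
      (fun a b h => Setoid.ext fun x y => iff_of_eq (congrFun (congrFun h x) y))
  -- the supremum is attained at some T
  obtain ⟨p, ⟨T, hT⟩, hmax⟩ :=
    Set.Finite.exists_maximalFor id (Set.range θ) (Set.toFinite _) (Set.range_nonempty θ)
  have htop : ∀ t, θ t ≤ θ T := by
    intro t
    have h1 : θ T ≤ θ (max t T) := hmono (le_max_right _ _)
    have h2 : p = θ (max t T) := le_antisymm (hT ▸ h1) (hmax ⟨max t T, rfl⟩ (hT ▸ h1))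
    calc θ t ≤ θ (max t T) := hmono (le_max_left _ _)
      _ = θ T := by rw [← h2, hT]
  have hsup : (⨆ t, θ t) = θ T := le_antisymm (iSup_le htop) (le_iSup θ T)
  -- key: the infimum of an upward-closed set defined by a monotone predicate is attained
  have key : ∀ P : Setoid X → Prop, (∀ r s : Setoid X, P r → r ≤ s → P s) →
      {t : ℝ≥0 | P (θ t)}.Nonempty → P (θ (sInf {t : ℝ≥0 | P (θ t)})) := by
    intro P hP hne
    set m := sInf {t : ℝ≥0 | P (θ t)} with hm
    obtain ⟨δ, hδ, heq⟩ := hD1 m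
    obtain ⟨s, hs, hlt⟩ := exists_lt_of_csInf_lt hne (lt_add_of_pos_right m hδ)
    have h1 : θ s ≤ θ (m + δ) := hmono hlt.le
    have h2 := hP _ _ hs h1
    rwa [← heq] at h2
  -- the diameter time attains the top partition
  have hdset : {t : ℝ≥0 | θ t = ⨆ t', θ t'} = {t : ℝ≥0 | θ T ≤ θ t} := by
    ext t
    simp only [Set.mem_setOf_eq, hsup]
    exact ⟨fun h => h.ge, fun h => le_antisymm (htop t) h⟩
  have hdiam : θ (diamPD θ) = θ T := by
    have h := key (fun r => θ T ≤ r) (fun r s h hrs => h.trans hrs) ⟨T, by simp only [Set.mem_setOf_eq]; exact le_rfl⟩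
    exact le_antisymm (htop _) (by rw [diamPD, hdset]; exact h)
  -- the merge time is attained
  have hmerge : ∀ x y : X, (⨆ t, θ t).r x y →
      (θ (sInf {t : ℝ≥0 | (θ t).r x y})).r x y := by
    intro x y hxy
    rw [hsup] at hxy
    exact key (fun r => r.r x y) (fun r s h hrs => hrs h) ⟨T, hxy⟩
  -- merge times are at most the diameter plus ε
  have hle : ∀ x z : X, Ueps θ ε x z ≤ diamPD θ + ε := by
    intro x z
    rw [Ueps]
    split_ifs with h
    · refine le_trans (csInf_le (OrderBot.bddBelow _) ?_) le_self_add
      show (θ (diamPD θ)).r x z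
      rw [hdiam]; rwa [hsup] at h
    · exact le_refl _
  refine ⟨?_, ?_, ?_⟩
  · intro x
    rw [Ueps]
    split_ifs with h
    · exact le_antisymm (csInf_le (OrderBot.bddBelow _) (Setoid.refl' _ x)) zero_le
    · exact absurd (Setoid.refl' _ x) h
  · intro x y
    have h1 : (⨆ t, θ t).r x y ↔ (⨆ t, θ t).r y x :=
      ⟨fun h => Setoid.symm' _ h, fun h => Setoid.symm' _ h⟩
    have h2 : {t : ℝ≥0 | (θ t).r x y} = {t : ℝ≥0 | (θ t).r y x} := by
      ext t
      exact ⟨fun h => Setoid.symm' _ h, fun h => Setoid.symm' _ h⟩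
    rw [Ueps, Ueps, h2]
    by_cases h : (⨆ t, θ t).r x y
    · rw [if_pos h, if_pos (h1.mp h)]
    · rw [if_neg h, if_neg fun h' => h (h1.mpr h')]
  · intro x y z
    by_cases hxy : (⨆ t, θ t).r x y
    · by_cases hyz : (⨆ t, θ t).r y z
      · have hxz : (⨆ t, θ t).r x z := Setoid.trans' _ hxy hyz
        have ha := hmerge x y hxy
        have hb := hmerge y z hyz
        set a := sInf {t : ℝ≥0 | (θ t).r x y}
        set b := sInf {t : ℝ≥0 | (θ t).r y z}
        have hma : (θ (max a b)).r x y := hmono (le_max_left a b) ha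
        have hmb : (θ (max a b)).r y z := hmono (le_max_right a b) hb
        have hmc : (θ (max a b)).r x z := Setoid.trans' _ hma hmb
        rw [Ueps, Ueps, Ueps, if_pos hxz, if_pos hxy, if_pos hyz]
        exact csInf_le (OrderBot.bddBelow _) hmc
      · have h : Ueps θ ε y z = diamPD θ + ε := by rw [Ueps, if_neg hyz]
        rw [h]
        exact le_max_of_le_right (hle x z)
    · have h : Ueps θ ε x y = diamPD θ + ε := by rw [Ueps, if_neg hxy]
      rw [h]
      exact le_max_of_le_left (hle x z)
end

section
/- Let X be a finite nonempty set, d : X × X → ℝ a function, p a positive integer, and Θ a finite set of partial dendrograms over X. Then there exists ε₀ > 0 such that for all ε, ε' ∈ (0, ε₀) and all θ, θ' ∈ Θ: ‖U_ε(θ) − d‖_p ≤ ‖U_ε(θ') − d‖_p if and only if ‖U_{ε'}(θ) − d‖_p ≤ ‖U_{ε'}(θ') − d‖_p. That is, all sufficiently small positive ε induce the same order on Θ by closeness of the completed ultrametric to d in the p-norm. -/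
open scoped NNReal
open Classical

/-- The `p`-norm distance between two functions `u, d : X × X → ℝ` on a finite set. -/
noncomputable def pnormDist {X : Type*} [Fintype X] (u d : X → X → ℝ) (p : ℕ) : ℝ :=
  (∑ x : X, ∑ y : X, |u x y - d x y| ^ p) ^ ((1 : ℝ) / p)

/-! ### Auxiliary machinery -/

/-- Per-term polynomial extension of `|U_ε(θ)(x,y) - d x y|^p` to real `ε`. -/
noncomputable def termF {X : Type*} (θ : ℝ≥0 → Setoid X) (d : X → X → ℝ) (p : ℕ)
    (x y : X) (ε : ℝ) : ℝ :=
  if (⨆ t, θ t).r x y then |((sInf {t : ℝ≥0 | (θ t).r x y} : ℝ≥0) : ℝ) - d x y| ^ p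
  else if 0 ≤ (diamPD θ : ℝ) - d x y then ((diamPD θ : ℝ) - d x y + ε) ^ p
  else (-(((diamPD θ : ℝ) - d x y) + ε)) ^ p

noncomputable def Fsum {X : Type*} [Fintype X] (θ : ℝ≥0 → Setoid X) (d : X → X → ℝ)
    (p : ℕ) (ε : ℝ) : ℝ :=
  ∑ x : X, ∑ y : X, termF θ d p x y ε

lemma analyticAt_termF {X : Type*} (θ : ℝ≥0 → Setoid X) (d : X → X → ℝ) (p : ℕ)
    (x y : X) (t : ℝ) : AnalyticAt ℝ (fun ε => termF θ d p x y ε) t := by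
  unfold termF
  by_cases h1 : (⨆ t, θ t).r x y
  · simp only [h1, if_true]; exact analyticAt_const
  · simp only [h1, if_false]
    by_cases h2 : 0 ≤ (diamPD θ : ℝ) - d x y
    · simp only [h2, if_true]
      exact (analyticAt_const.add analyticAt_id).pow p
    · simp only [h2, if_false]
      exact ((analyticAt_const.add analyticAt_id).neg).pow p

lemma analyticAt_Fsum {X : Type*} [Fintype X] (θ : ℝ≥0 → Setoid X) (d : X → X → ℝ)
    (p : ℕ) (t : ℝ) : AnalyticAt ℝ (Fsum θ d p) t := by
  unfold Fsum
  exact Finset.analyticAt_fun_sum _ fun x _ =>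
    Finset.analyticAt_fun_sum _ fun y _ => analyticAt_termF θ d p x y t

/-- Sign-stability near `0⁺` of a function analytic everywhere. -/
lemma sign_stable (h : ℝ → ℝ) (ha : ∀ t : ℝ, AnalyticAt ℝ h t) :
    ∃ δ : ℝ, 0 < δ ∧ ∀ ε ε' : ℝ, 0 < ε → ε < δ → 0 < ε' → ε' < δ →
      (h ε ≤ 0 ↔ h ε' ≤ 0) := by
  rcases (ha 0).eventually_eq_zero_or_eventually_ne_zero with hz | hnz
  · rcases Metric.eventually_nhds_iff.mp hz with ⟨δ, hδ, hball⟩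
    refine ⟨δ, hδ, fun ε ε' hε hεδ hε' hε'δ => ?_⟩
    have h1 : h ε = 0 := hball (by rw [Real.dist_eq, sub_zero, abs_of_pos hε]; exact hεδ)
    have h2 : h ε' = 0 := hball (by rw [Real.dist_eq, sub_zero, abs_of_pos hε']; exact hε'δ)
    simp [h1, h2]
  · rcases Metric.mem_nhdsWithin_iff.mp hnz with ⟨δ, hδ, hball⟩
    have hne : ∀ t : ℝ, 0 < t → t < δ → h t ≠ 0 := by
      intro t ht htδ
      exact hball ⟨by rw [Metric.mem_ball, Real.dist_eq, sub_zero, abs_of_pos ht]; exact htδ,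
        by simp [ht.ne']⟩
    have hcont : Continuous h := continuous_iff_continuousAt.mpr fun t => (ha t).continuousAt
    refine ⟨δ, hδ, ?_⟩
    have key : ∀ a b : ℝ, 0 < a → a < δ → 0 < b → b < δ → h a ≤ 0 → h b ≤ 0 := by
      intro a b ha0 haδ hb0 hbδ hha
      by_contra hhb
      push_neg at hhb
      have hha' : h a < 0 := lt_of_le_of_ne hha (hne a ha0 haδ)
      have h0mem : (0 : ℝ) ∈ Set.uIcc (h a) (h b) :=
        Set.mem_uIcc.mpr (Or.inl ⟨hha'.le, hhb.le⟩)
      obtain ⟨c, hc, hc0⟩ := intermediate_value_uIcc hcont.continuousOn h0mem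
      rw [Set.mem_uIcc] at hc
      rcases hc with ⟨h1, h2⟩ | ⟨h1, h2⟩
      · exact hne c (ha0.trans_le h1) (lt_of_le_of_lt h2 hbδ) hc0
      · exact hne c (hb0.trans_le h1) (lt_of_le_of_lt h2 haδ) hc0
    exact fun ε ε' hε hεδ hε' hε'δ => ⟨key ε ε' hε hεδ hε' hε'δ, key ε' ε hε' hε'δ hε hεδ⟩

/-- The threshold below which `Fsum` agrees with the true `p`-power sum. -/
noncomputable def thr {X : Type*} [Fintype X] [Nonempty X] (θ : ℝ≥0 → Setoid X)
    (d : X → X → ℝ) : ℝ :=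
  Finset.univ.inf' (Finset.univ_nonempty (α := X × X)) fun q : X × X =>
    if (⨆ t, θ t).r q.1 q.2 ∨ 0 ≤ (diamPD θ : ℝ) - d q.1 q.2 then 1
    else -((diamPD θ : ℝ) - d q.1 q.2)

lemma thr_pos {X : Type*} [Fintype X] [Nonempty X] (θ : ℝ≥0 → Setoid X)
    (d : X → X → ℝ) : 0 < thr θ d := by
  rw [thr, Finset.lt_inf'_iff]
  intro q _
  split_ifs with h
  · exact one_pos
  · push_neg at h
    linarith [h.2]

lemma thr_le {X : Type*} [Fintype X] [Nonempty X] (θ : ℝ≥0 → Setoid X)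
    (d : X → X → ℝ) (x y : X) (h1 : ¬ (⨆ t, θ t).r x y)
    (h2 : ¬ 0 ≤ (diamPD θ : ℝ) - d x y) :
    thr θ d ≤ -((diamPD θ : ℝ) - d x y) := by
  have := Finset.inf'_le (f := fun q : X × X =>
    if (⨆ t, θ t).r q.1 q.2 ∨ 0 ≤ (diamPD θ : ℝ) - d q.1 q.2 then 1
    else -((diamPD θ : ℝ) - d q.1 q.2)) (b := (x, y)) (Finset.mem_univ _)
  rw [if_neg (by tauto)] at this
  exact this

/-- On `(0, thr θ d)`, `Fsum` equals the `p`-power sum of `|U_ε - d|`. -/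
lemma Fsum_eq {X : Type*} [Fintype X] [Nonempty X] (θ : ℝ≥0 → Setoid X)
    (d : X → X → ℝ) (p : ℕ) (ε : ℝ≥0) (hε : 0 < ε) (hεt : (ε : ℝ) < thr θ d) :
    (∑ x : X, ∑ y : X, |((Ueps θ ε x y : ℝ≥0) : ℝ) - d x y| ^ p) = Fsum θ d p (ε : ℝ) := by
  unfold Fsum
  refine Finset.sum_congr rfl fun x _ => Finset.sum_congr rfl fun y _ => ?_
  unfold Ueps termF
  by_cases h1 : (⨆ t, θ t).r x y
  · simp only [h1, if_true]
  · simp only [h1, if_false]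
    push_cast
    by_cases h2 : 0 ≤ (diamPD θ : ℝ) - d x y
    · simp only [h2, if_true]
      rw [abs_of_nonneg (by push_cast; linarith [h2, NNReal.coe_pos.mpr hε])]
      ring_nf
    · simp only [h2, if_false]
      have hle : (ε : ℝ) < -((diamPD θ : ℝ) - d x y) := lt_of_lt_of_le hεt (thr_le θ d x y h1 h2)
      rw [abs_of_neg (by linarith)]
      ring_nf

/-- For a finite family `Θ` of partial dendrograms over a finite
nonempty set `X`, a dissimilarity `d` and an integer `p ≥ 1`, there is an `ε₀ > 0`
such that all `ε, ε' ∈ (0, ε₀)` induce the same order on `Θ` by closeness of the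
completed ultrametric `U_ε(θ)` to `d` in the `p`-norm. -/
theorem eps_order_stable {X : Type*} [Fintype X] [Nonempty X]
    (d : X → X → ℝ) (p : ℕ) (hp : 1 ≤ p)
    (Θ : Set (ℝ≥0 → Setoid X)) (hΘfin : Θ.Finite)
    (hΘ : ∀ θ ∈ Θ, Monotone θ ∧
      (∀ t : ℝ≥0, ∃ δ : ℝ≥0, 0 < δ ∧ θ t = θ (t + δ)) ∧ θ 0 = ⊥) :
    ∃ ε₀ : ℝ≥0, 0 < ε₀ ∧
      ∀ ε ε' : ℝ≥0, 0 < ε → ε < ε₀ → 0 < ε' → ε' < ε₀ →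
        ∀ θ ∈ Θ, ∀ θ' ∈ Θ,
          (pnormDist (fun x y => (Ueps θ ε x y : ℝ)) d p ≤
              pnormDist (fun x y => (Ueps θ' ε x y : ℝ)) d p ↔
            pnormDist (fun x y => (Ueps θ ε' x y : ℝ)) d p ≤
              pnormDist (fun x y => (Ueps θ' ε' x y : ℝ)) d p) := by
  -- For every pair (θ, θ') there is a good threshold.
  have key : ∀ θ θ' : ℝ≥0 → Setoid X, ∃ ε₁ : ℝ≥0, 0 < ε₁ ∧
      ∀ ε ε' : ℝ≥0, 0 < ε → ε < ε₁ → 0 < ε' → ε' < ε₁ →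
        (pnormDist (fun x y => (Ueps θ ε x y : ℝ)) d p ≤
            pnormDist (fun x y => (Ueps θ' ε x y : ℝ)) d p ↔
          pnormDist (fun x y => (Ueps θ ε' x y : ℝ)) d p ≤
            pnormDist (fun x y => (Ueps θ' ε' x y : ℝ)) d p) := by
    intro θ θ'
    obtain ⟨δ, hδ, hsign⟩ := sign_stable (fun t => Fsum θ d p t - Fsum θ' d p t)
      (fun t => (analyticAt_Fsum θ d p t).sub (analyticAt_Fsum θ' d p t))
    set r : ℝ := min (min (thr θ d) (thr θ' d)) δ with hr
    have hrpos : 0 < r := lt_min (lt_min (thr_pos θ d) (thr_pos θ' d)) hδ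
    refine ⟨r.toNNReal, Real.toNNReal_pos.mpr hrpos, ?_⟩
    intro ε ε' hε hεr hε' hε'r
    have hεR : (ε : ℝ) < r := Real.lt_toNNReal_iff_coe_lt.mp hεr
    have hε'R : (ε' : ℝ) < r := Real.lt_toNNReal_iff_coe_lt.mp hε'r
    -- translate pnormDist comparisons to Fsum comparisons
    have cmp : ∀ η : ℝ≥0, 0 < η → (η : ℝ) < r →
        ((pnormDist (fun x y => (Ueps θ η x y : ℝ)) d p ≤
            pnormDist (fun x y => (Ueps θ' η x y : ℝ)) d p) ↔
          Fsum θ d p (η : ℝ) - Fsum θ' d p (η : ℝ) ≤ 0) := by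
      intro η hη hηr
      have h1 : (∑ x : X, ∑ y : X, |((Ueps θ η x y : ℝ≥0) : ℝ) - d x y| ^ p)
          = Fsum θ d p (η : ℝ) :=
        Fsum_eq θ d p η hη (lt_of_lt_of_le hηr (le_trans (min_le_left _ _) (min_le_left _ _)))
      have h2 : (∑ x : X, ∑ y : X, |((Ueps θ' η x y : ℝ≥0) : ℝ) - d x y| ^ p)
          = Fsum θ' d p (η : ℝ) :=
        Fsum_eq θ' d p η hη (lt_of_lt_of_le hηr (le_trans (min_le_left _ _) (min_le_right _ _)))
      have hnn : ∀ u : X → X → ℝ, 0 ≤ ∑ x : X, ∑ y : X, |u x y - d x y| ^ p :=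
        fun u => Finset.sum_nonneg fun x _ => Finset.sum_nonneg fun y _ =>
          pow_nonneg (abs_nonneg _) p
      unfold pnormDist
      rw [Real.rpow_le_rpow_iff (hnn _) (hnn _)
        (by positivity : (0:ℝ) < (1 : ℝ) / p), h1, h2]
      constructor <;> intro h <;> linarith
    rw [cmp ε hε hεR, cmp ε' hε' hε'R]
    exact hsign (ε : ℝ) (ε' : ℝ) (NNReal.coe_pos.mpr hε) (hεR.trans_le (min_le_right _ _))
      (NNReal.coe_pos.mpr hε') (hε'R.trans_le (min_le_right _ _))
  -- choose thresholds and take the minimum over the finite set of pairs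
  choose E hEpos hE using key
  rcases Set.eq_empty_or_nonempty Θ with hΘe | hΘne
  · exact ⟨1, one_pos, fun ε ε' _ _ _ _ θ hθ => by simp [hΘe] at hθ⟩
  · have hne : (hΘfin.toFinset ×ˢ hΘfin.toFinset).Nonempty := by
      obtain ⟨θ, hθ⟩ := hΘne
      exact ⟨(θ, θ), Finset.mem_product.mpr ⟨hΘfin.mem_toFinset.mpr hθ, hΘfin.mem_toFinset.mpr hθ⟩⟩
    refine ⟨(hΘfin.toFinset ×ˢ hΘfin.toFinset).inf' hne (fun q => E q.1 q.2), ?_, ?_⟩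
    · rw [Finset.lt_inf'_iff]
      exact fun q _ => hEpos q.1 q.2
    · intro ε ε' hε hεr hε' hε'r θ hθ θ' hθ'
      have hmem : (θ, θ') ∈ hΘfin.toFinset ×ˢ hΘfin.toFinset :=
        Finset.mem_product.mpr ⟨hΘfin.mem_toFinset.mpr hθ, hΘfin.mem_toFinset.mpr hθ'⟩
      have hle := Finset.inf'_le (fun q : (ℝ≥0 → Setoid X) × (ℝ≥0 → Setoid X) => E q.1 q.2) hmem
      exact hE θ θ' ε ε' hε (lt_of_lt_of_le hεr hle) hε' (lt_of_lt_of_le hε'r hle)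
end

section
/- Let (X,E) be a strict poset and ≈ a regular equivalence relation on X, with S the transitive closure of the induced relation on X/≈. Let a, b ∈ X be such that the classes ⟦a⟧ and ⟦b⟧ are distinct and non-comparable under S (neither S(⟦a⟧,⟦b⟧) nor S(⟦b⟧,⟦a⟧) holds). Then the smallest equivalence relation ≈' on X containing ≈ and the pair (a,b) is again regular. In particular, any clustering obtained from the singleton partition by successively merging pairs of non-comparable classes is order preserving. -/
/-- An equivalence relation `s` on a strict poset `(X,E)` is regular if the
transitive closure of the induced relation on the quotient is irreflexive
(equivalently, a strict partial order). -/
def RegularSetoid {X : Type*} (E : X → X → Prop) (s : Setoid X) : Prop :=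
  Irreflexive (Relation.TransGen (inducedRel E s))

namespace MergeAux

variable {X : Type*} (E : X → X → Prop) (s : Setoid X) (a b : X)

/-- A path in the old quotient allowing at most one "jump" from `⟦a⟧` to `⟦b⟧`
or from `⟦b⟧` to `⟦a⟧`, with at least one genuine `E`-step. -/
def Rmix (x y : X) : Prop :=
  Relation.TransGen (inducedRel E s) (Quotient.mk s x) (Quotient.mk s y)
  ∨ ((Relation.TransGen (inducedRel E s) (Quotient.mk s x) (Quotient.mk s a) ∧
       Relation.ReflTransGen (inducedRel E s) (Quotient.mk s b) (Quotient.mk s y)) ∨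
      (Quotient.mk s x = Quotient.mk s a ∧
       Relation.TransGen (inducedRel E s) (Quotient.mk s b) (Quotient.mk s y)))
  ∨ ((Relation.TransGen (inducedRel E s) (Quotient.mk s x) (Quotient.mk s b) ∧
       Relation.ReflTransGen (inducedRel E s) (Quotient.mk s a) (Quotient.mk s y)) ∨
      (Quotient.mk s x = Quotient.mk s b ∧
       Relation.TransGen (inducedRel E s) (Quotient.mk s a) (Quotient.mk s y)))


variable {E s a b}

/-- `Rmix` is transitive (given the non-comparability hypotheses). -/
theorem Rmix.comp (hreg : RegularSetoid E s)
    (hab : Quotient.mk s a ≠ Quotient.mk s b)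
    (hnc₁ : ¬ Relation.TransGen (inducedRel E s) (Quotient.mk s a) (Quotient.mk s b))
    (hnc₂ : ¬ Relation.TransGen (inducedRel E s) (Quotient.mk s b) (Quotient.mk s a))
    {x m y : X} (h₁ : Rmix E s a b x m) (h₂ : Rmix E s a b m y) :
    Rmix E s a b x y := by
  obtain h1 | (⟨h1, h1'⟩ | ⟨h1, h1'⟩) | (⟨h1, h1'⟩ | ⟨h1, h1'⟩) := h₁ <;>
    obtain h2 | (⟨h2, h2'⟩ | ⟨h2, h2'⟩) | (⟨h2, h2'⟩ | ⟨h2, h2'⟩) := h₂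
  -- 1 × *
  · exact Or.inl (h1.trans h2)
  · exact Or.inr (Or.inl (Or.inl ⟨h1.trans h2, h2'⟩))
  · rw [h2] at h1
    exact Or.inr (Or.inl (Or.inl ⟨h1, h2'.to_reflTransGen⟩))
  · exact Or.inr (Or.inr (Or.inl ⟨h1.trans h2, h2'⟩))
  · rw [h2] at h1
    exact Or.inr (Or.inr (Or.inl ⟨h1, h2'.to_reflTransGen⟩))
  -- 2a × *
  · exact Or.inr (Or.inl (Or.inl ⟨h1, h1'.trans h2.to_reflTransGen⟩))
  · exact absurd (Relation.TransGen.trans_right h1' h2) hnc₂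
  · rw [h2] at h1'
    rcases Relation.reflTransGen_iff_eq_or_transGen.mp h1' with he | ht
    · exact absurd he hab
    · exact absurd ht hnc₂
  · exact absurd (Relation.TransGen.trans_right h1' h2) (hreg _)
  · rw [h2] at h1'
    rcases Relation.reflTransGen_iff_eq_or_transGen.mp h1' with he | ht
    · exact Or.inl (h1.trans h2')
    · exact absurd ht (hreg _)
  -- 2b × *
  · exact Or.inr (Or.inl (Or.inr ⟨h1, h1'.trans h2⟩))
  · exact absurd (h1'.trans h2) hnc₂
  · rw [h2] at h1'
    exact absurd h1' hnc₂
  · exact absurd (h1'.trans h2) (hreg _)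
  · rw [h2] at h1'
    exact absurd h1' (hreg _)
  -- 3a × *
  · exact Or.inr (Or.inr (Or.inl ⟨h1, h1'.trans h2.to_reflTransGen⟩))
  · exact absurd (Relation.TransGen.trans_right h1' h2) (hreg _)
  · rw [h2] at h1'
    rcases Relation.reflTransGen_iff_eq_or_transGen.mp h1' with he | ht
    · exact Or.inl (h1.trans h2')
    · exact absurd ht (hreg _)
  · exact absurd (Relation.TransGen.trans_right h1' h2) hnc₁
  · rw [h2] at h1'
    rcases Relation.reflTransGen_iff_eq_or_transGen.mp h1' with he | ht
    · exact absurd he.symm hab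
    · exact absurd ht hnc₁
  -- 3b × *
  · exact Or.inr (Or.inr (Or.inr ⟨h1, h1'.trans h2⟩))
  · exact absurd (h1'.trans h2) (hreg _)
  · rw [h2] at h1'
    exact absurd h1' (hreg _)
  · exact absurd (h1'.trans h2) hnc₁
  · rw [h2] at h1'
    exact absurd h1' hnc₁

/-- A single step of the induced relation in the new quotient yields `Rmix`. -/
theorem Rmix.step (hreg : RegularSetoid E s)
    (hnc₁ : ¬ Relation.TransGen (inducedRel E s) (Quotient.mk s a) (Quotient.mk s b))
    (hnc₂ : ¬ Relation.TransGen (inducedRel E s) (Quotient.mk s b) (Quotient.mk s a))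
    (s' : Setoid X)
    (hkey : ∀ p q : X, s' p q →
      Quotient.mk s p = Quotient.mk s q ∨
      (Quotient.mk s p = Quotient.mk s a ∧ Quotient.mk s b = Quotient.mk s q) ∨
      (Quotient.mk s p = Quotient.mk s b ∧ Quotient.mk s a = Quotient.mk s q))
    {α β : Quotient s'} (hstep : inducedRel E s' α β)
    {x y : X} (hx : Quotient.mk s' x = α) (hy : Quotient.mk s' y = β) :
    Rmix E s a b x y := by
  obtain ⟨u, v, hu, hv, huv⟩ := hstep
  have hxu : s' x u := Quotient.exact (hx.trans hu.symm)
  have hvy : s' v y := Quotient.exact (hv.trans hy.symm)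
  have hS : Relation.TransGen (inducedRel E s) (Quotient.mk s u) (Quotient.mk s v) :=
    Relation.TransGen.single ⟨u, v, rfl, rfl, huv⟩
  rcases hkey x u hxu with h1 | ⟨h1, h1'⟩ | ⟨h1, h1'⟩ <;>
    rcases hkey v y hvy with h2 | ⟨h2, h2'⟩ | ⟨h2, h2'⟩
  · rw [← h1, h2] at hS
    exact Or.inl hS
  · rw [← h1, h2] at hS
    have hr : Relation.ReflTransGen (inducedRel E s) (Quotient.mk s b) (Quotient.mk s y) := by
      rw [h2']
    exact Or.inr (Or.inl (Or.inl ⟨hS, hr⟩))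
  · rw [← h1, h2] at hS
    have hr : Relation.ReflTransGen (inducedRel E s) (Quotient.mk s a) (Quotient.mk s y) := by
      rw [h2']
    exact Or.inr (Or.inr (Or.inl ⟨hS, hr⟩))
  · rw [← h1', h2] at hS
    exact Or.inr (Or.inl (Or.inr ⟨h1, hS⟩))
  · rw [← h1', h2] at hS
    exact absurd hS hnc₂
  · rw [← h1', h2] at hS
    exact absurd hS (hreg _)
  · rw [← h1', h2] at hS
    exact Or.inr (Or.inr (Or.inr ⟨h1, hS⟩))
  · rw [← h1', h2] at hS
    exact absurd hS (hreg _)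
  · rw [← h1', h2] at hS
    exact absurd hS hnc₁

/-- Any transitive chain in the new quotient yields `Rmix` on representatives. -/
theorem Rmix.main (hreg : RegularSetoid E s)
    (hab : Quotient.mk s a ≠ Quotient.mk s b)
    (hnc₁ : ¬ Relation.TransGen (inducedRel E s) (Quotient.mk s a) (Quotient.mk s b))
    (hnc₂ : ¬ Relation.TransGen (inducedRel E s) (Quotient.mk s b) (Quotient.mk s a))
    (s' : Setoid X)
    (hkey : ∀ p q : X, s' p q →
      Quotient.mk s p = Quotient.mk s q ∨
      (Quotient.mk s p = Quotient.mk s a ∧ Quotient.mk s b = Quotient.mk s q) ∨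
      (Quotient.mk s p = Quotient.mk s b ∧ Quotient.mk s a = Quotient.mk s q))
    {α β : Quotient s'} (h : Relation.TransGen (inducedRel E s') α β) :
    ∀ x y : X, Quotient.mk s' x = α → Quotient.mk s' y = β → Rmix E s a b x y := by
  induction h with
  | single h => exact fun x y hx hy => Rmix.step hreg hnc₁ hnc₂ s' hkey h hx hy
  | @tail γ δ h hstep ih =>
      intro x y hx hy
      obtain ⟨m, hm⟩ := Quotient.exists_rep γ
      exact Rmix.comp hreg hab hnc₁ hnc₂ (ih x m hx hm)
        (Rmix.step hreg hnc₁ hnc₂ s' hkey hstep hm hy)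

end MergeAux


/-- Let `s` be a regular equivalence relation on a strict poset
`(X,E)`, and let `a, b ∈ X` have distinct classes which are non-comparable under
the transitive closure `S` of the induced relation.  Then the smallest equivalence
relation `s'` containing `s` and identifying `a` with `b` is again regular. -/
theorem merge_noncomparable_regular {X : Type*} (E : X → X → Prop)
    (hirr : Irreflexive E) (htrans : Transitive E)
    (s : Setoid X) (hreg : RegularSetoid E s)
    (a b : X)
    (hab : Quotient.mk s a ≠ Quotient.mk s b)
    (hnc₁ : ¬ Relation.TransGen (inducedRel E s) (Quotient.mk s a) (Quotient.mk s b))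
    (hnc₂ : ¬ Relation.TransGen (inducedRel E s) (Quotient.mk s b) (Quotient.mk s a))
    (s' : Setoid X)
    (hle : s ≤ s') (hab' : s'.r a b)
    (hleast : ∀ s'' : Setoid X, s ≤ s'' → s''.r a b → s' ≤ s'') :
    RegularSetoid E s' := by
  -- the explicit description of the smallest setoid containing `s` and `(a,b)`
  set rnew : X → X → Prop :=
    fun p q => s p q ∨ (s p a ∧ s b q) ∨ (s p b ∧ s a q) with hrnew
  have requiv : Equivalence rnew := by
    constructor
    · exact fun x => Or.inl (s.refl x)
    · rintro x y (h | ⟨h1, h2⟩ | ⟨h1, h2⟩)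
      · exact Or.inl (s.symm h)
      · exact Or.inr (Or.inr ⟨s.symm h2, s.symm h1⟩)
      · exact Or.inr (Or.inl ⟨s.symm h2, s.symm h1⟩)
    · rintro x y z (h | ⟨h1, h1'⟩ | ⟨h1, h1'⟩) (h2 | ⟨h2, h2'⟩ | ⟨h2, h2'⟩)
      · exact Or.inl (s.trans h h2)
      · exact Or.inr (Or.inl ⟨s.trans h h2, h2'⟩)
      · exact Or.inr (Or.inr ⟨s.trans h h2, h2'⟩)
      · exact Or.inr (Or.inl ⟨h1, s.trans h1' h2⟩)
      · exact Or.inl (s.trans h1 (s.trans (s.symm (s.trans h1' h2)) h2'))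
      · exact Or.inl (s.trans h1 h2')
      · exact Or.inr (Or.inr ⟨h1, s.trans h1' h2⟩)
      · exact Or.inl (s.trans h1 h2')
      · exact Or.inl (s.trans h1 (s.trans (s.symm (s.trans h1' h2)) h2'))
  set t : Setoid X := ⟨rnew, requiv⟩ with ht
  have hst : s ≤ t := fun _ _ h => Or.inl h
  have htab : t a b := Or.inr (Or.inl ⟨s.refl a, s.refl b⟩)
  have hs't : s' ≤ t := hleast t hst htab
  have hkey : ∀ p q : X, s' p q →
      Quotient.mk s p = Quotient.mk s q ∨
      (Quotient.mk s p = Quotient.mk s a ∧ Quotient.mk s b = Quotient.mk s q) ∨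
      (Quotient.mk s p = Quotient.mk s b ∧ Quotient.mk s a = Quotient.mk s q) := by
    intro p q hpq
    rcases hs't hpq with h | ⟨h1, h2⟩ | ⟨h1, h2⟩
    · exact Or.inl (Quotient.sound h)
    · exact Or.inr (Or.inl ⟨Quotient.sound h1, Quotient.sound h2⟩)
    · exact Or.inr (Or.inr ⟨Quotient.sound h1, Quotient.sound h2⟩)
  intro α hcyc
  obtain ⟨x, hx⟩ := Quotient.exists_rep α
  have hmix := MergeAux.Rmix.main hreg hab hnc₁ hnc₂ s' hkey hcyc x x hx hx
  rcases hmix with h | (⟨h1, h1'⟩ | ⟨h1, h1'⟩) | (⟨h1, h1'⟩ | ⟨h1, h1'⟩)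
  · exact hreg _ h
  · exact hnc₂ (Relation.TransGen.trans_right h1' h1)
  · exact hnc₂ (h1 ▸ h1')
  · exact hnc₁ (Relation.TransGen.trans_right h1' h1)
  · exact hnc₁ (h1 ▸ h1')
end
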